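/- Let h ≥ 1, J ≥ 1, let ν_1,…,ν_J be pairwise distinct positive reals, and let v_1,…,v_J, w_1,…,w_J ∈ ℝ^h. Define σ : ℝ → ℝ^h by σ(t) = Σ_{j=1}^J ( v_j·cos(ν_j t) + w_j·sin(ν_j t) ). If the vectors v_1,…,v_J, w_1,…,w_J span ℝ^h (equivalently, for every nonzero α ∈ ℝ^h the scalar signal α^⊺σ is a nontrivial finite linear combination of sinusoids with nonzero, pairwise distinct frequencies), then σ is persistently exciting on [0, ∞). -/

import Mathlib

open MeasureTheory

open Real Matrix


lemma intCos (ω : ℝ) (hω : ω ≠ 0) (a b : ℝ) :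
    ∫ τ in a..b, Real.cos (ω * τ) = (Real.sin (ω * b) - Real.sin (ω * a)) / ω := by
  rw [intervalIntegral.integral_comp_mul_left _ hω, integral_cos]
  simp [smul_eq_mul]; ring

lemma absIntCos (ω : ℝ) (hω : ω ≠ 0) (a b : ℝ) :
    |∫ τ in a..b, Real.cos (ω * τ)| ≤ 2 / |ω| := by
  rw [intCos ω hω, abs_div]
  gcongr
  calc |Real.sin (ω*b) - Real.sin (ω*a)| ≤ |Real.sin (ω*b)| + |Real.sin (ω*a)| := abs_sub _ _
  _ ≤ 1 + 1 := by gcongr <;> exact Real.abs_sin_le_one _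
  _ = 2 := by norm_num

lemma intSin (ω : ℝ) (hω : ω ≠ 0) (a b : ℝ) :
    ∫ τ in a..b, Real.sin (ω * τ) = (Real.cos (ω * a) - Real.cos (ω * b)) / ω := by
  rw [intervalIntegral.integral_comp_mul_left _ hω, integral_sin]
  simp [smul_eq_mul]; ring

lemma absIntSin (ω : ℝ) (hω : ω ≠ 0) (a b : ℝ) :
    |∫ τ in a..b, Real.sin (ω * τ)| ≤ 2 / |ω| := by
  rw [intSin ω hω, abs_div]
  gcongr
  calc |Real.cos (ω*a) - Real.cos (ω*b)| ≤ |Real.cos (ω*a)| + |Real.cos (ω*b)| := abs_sub _ _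
  _ ≤ 1 + 1 := by gcongr <;> exact Real.abs_cos_le_one _
  _ = 2 := by norm_num

lemma prodsum (A B C D : ℝ) : |A*C-B*D| + |B*C+A*D| ≤ A^2+B^2+C^2+D^2 := by
  have h1 : |A*C-B*D| ≤ |A| * |C| + |B| * |D| := by
    calc |A*C-B*D| ≤ |A*C| + |B*D| := abs_sub _ _
    _ = |A| * |C| + |B| * |D| := by rw [abs_mul, abs_mul]
  have h2 : |B*C+A*D| ≤ |B| * |C| + |A| * |D| := by
    calc |B*C+A*D| ≤ |B*C| + |A*D| := abs_add_le _ _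
    _ = |B| * |C| + |A| * |D| := by rw [abs_mul, abs_mul]
  nlinarith [sq_nonneg (|A|-|C|), sq_nonneg (|B|-|D|), sq_nonneg (|B|-|C|),
    sq_nonneg (|A|-|D|), sq_abs A, sq_abs B, sq_abs C, sq_abs D]

lemma abs4 (w x y z : ℝ) : |w + (x + (y + z))| ≤ |w| + |x| + |y| + |z| := by
  calc |w + (x+(y+z))| ≤ |w| + |x+(y+z)| := abs_add_le _ _
   _ ≤ |w| + (|x| + |y+z|) := by gcongr; exact abs_add_le _ _
   _ ≤ |w| + (|x| + (|y| + |z|)) := by gcongr; exact abs_add_le _ _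
   _ = |w|+|x|+|y|+|z| := by ring

lemma keyBound (p q : ℝ) (hp : 0 < p) (hq : 0 < q) (A B C D t T : ℝ) :
    |(∫ τ in t..(t+T), (A*Real.cos (p*τ)+B*Real.sin (p*τ))*(C*Real.cos (q*τ)+D*Real.sin (q*τ)))
      - (if p = q then (A*C+B*D)*T/2 else 0)|
    ≤ ((if p = q then 0 else 1/|p-q|) + 1/(p+q)) * (A^2+B^2+C^2+D^2) := by
  have hs : p + q ≠ 0 := by positivity
  have hcI : ∀ ω : ℝ, IntervalIntegrable (fun τ => Real.cos (ω*τ)) volume t (t+T) := by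
    intro ω; exact (Real.continuous_cos.comp (continuous_const.mul continuous_id)).intervalIntegrable _ _
  have hsI : ∀ ω : ℝ, IntervalIntegrable (fun τ => Real.sin (ω*τ)) volume t (t+T) := by
    intro ω; exact (Real.continuous_sin.comp (continuous_const.mul continuous_id)).intervalIntegrable _ _
  have expand : (fun τ => (A*Real.cos (p*τ)+B*Real.sin (p*τ))*(C*Real.cos (q*τ)+D*Real.sin (q*τ)))
      = fun τ => (A*C+B*D)/2 * Real.cos ((p-q)*τ) + ((A*C-B*D)/2 * Real.cos ((p+q)*τ)
        + ((B*C+A*D)/2 * Real.sin ((p+q)*τ) + (B*C-A*D)/2 * Real.sin ((p-q)*τ))) := by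
    funext τ
    have e1 : (p-q)*τ = p*τ - q*τ := by ring
    have e2 : (p+q)*τ = p*τ + q*τ := by ring
    rw [e1, e2, Real.cos_sub, Real.cos_add, Real.sin_add, Real.sin_sub]
    ring
  rw [expand, intervalIntegral.integral_add ((hcI _).const_mul _)
      (((hcI _).const_mul _).add (((hsI _).const_mul _).add ((hsI _).const_mul _))),
    intervalIntegral.integral_add ((hcI _).const_mul _)
      (((hsI _).const_mul _).add ((hsI _).const_mul _)),
    intervalIntegral.integral_add ((hsI _).const_mul _) ((hsI _).const_mul _),
    intervalIntegral.integral_const_mul, intervalIntegral.integral_const_mul,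
    intervalIntegral.integral_const_mul, intervalIntegral.integral_const_mul]
  have h2 := absIntCos (p+q) hs t (t+T)
  have h3 := absIntSin (p+q) hs t (t+T)
  by_cases hpq : p = q
  · subst hpq
    rw [if_pos rfl, if_pos rfl]
    simp only [sub_self, zero_mul, Real.cos_zero, Real.sin_zero,
      intervalIntegral.integral_const, intervalIntegral.integral_zero, smul_eq_mul]
    have e3 : |(A*C+B*D)/2*((t+T-t)*1) + ((A*C-B*D)/2 * (∫ τ in t..(t+T), Real.cos ((p+p)*τ))
        + ((B*C+A*D)/2 * (∫ τ in t..(t+T), Real.sin ((p+p)*τ)) + (B*C-A*D)/2*0)) - (A*C+B*D)*T/2|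
        = |(A*C-B*D)/2 * (∫ τ in t..(t+T), Real.cos ((p+p)*τ))
          + (B*C+A*D)/2 * (∫ τ in t..(t+T), Real.sin ((p+p)*τ))| := by
      congr 1; ring
    rw [e3]
    have hps := prodsum A B C D
    calc |(A*C-B*D)/2 * (∫ τ in t..(t+T), Real.cos ((p+p)*τ))
          + (B*C+A*D)/2 * (∫ τ in t..(t+T), Real.sin ((p+p)*τ))|
        ≤ |(A*C-B*D)/2| * |(∫ τ in t..(t+T), Real.cos ((p+p)*τ))|
          + |(B*C+A*D)/2| * |(∫ τ in t..(t+T), Real.sin ((p+p)*τ))| := by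
          refine (abs_add_le _ _).trans ?_; rw [abs_mul, abs_mul]
      _ ≤ |(A*C-B*D)/2| * (2/|p+p|) + |(B*C+A*D)/2| * (2/|p+p|) := by gcongr
      _ = (|A*C-B*D| + |B*C+A*D|) * (1/|p+p|) := by
          rw [abs_div, abs_div]; norm_num; ring
      _ ≤ (A^2+B^2+C^2+D^2) * (1/|p+p|) := by gcongr
      _ = (0 + 1/(p+p)) * (A^2+B^2+C^2+D^2) := by
          rw [abs_of_pos (show (0:ℝ) < p+p by positivity)]; ring
  · rw [if_neg hpq, if_neg hpq, sub_zero]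
    have hδ : p - q ≠ 0 := sub_ne_zero.mpr hpq
    have h1 := absIntCos (p-q) hδ t (t+T)
    have h4 := absIntSin (p-q) hδ t (t+T)
    have hps1 := prodsum A B C (-D)
    have hps2 := prodsum A B C D
    rw [show A*C-B*(-D) = A*C+B*D by ring, show B*C+A*(-D) = B*C-A*D by ring,
      show A^2+B^2+C^2+(-D)^2 = A^2+B^2+C^2+D^2 by ring] at hps1
    calc |(A*C+B*D)/2 * (∫ τ in t..(t+T), Real.cos ((p-q)*τ))
          + ((A*C-B*D)/2 * (∫ τ in t..(t+T), Real.cos ((p+q)*τ))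
          + ((B*C+A*D)/2 * (∫ τ in t..(t+T), Real.sin ((p+q)*τ))
          + (B*C-A*D)/2 * (∫ τ in t..(t+T), Real.sin ((p-q)*τ))))|
        ≤ |(A*C+B*D)/2| * |(∫ τ in t..(t+T), Real.cos ((p-q)*τ))|
          + |(A*C-B*D)/2| * |(∫ τ in t..(t+T), Real.cos ((p+q)*τ))|
          + |(B*C+A*D)/2| * |(∫ τ in t..(t+T), Real.sin ((p+q)*τ))|
          + |(B*C-A*D)/2| * |(∫ τ in t..(t+T), Real.sin ((p-q)*τ))| := by
          simpa [abs_mul] using abs4 ((A*C+B*D)/2 * (∫ τ in t..(t+T), Real.cos ((p-q)*τ)))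
            ((A*C-B*D)/2 * (∫ τ in t..(t+T), Real.cos ((p+q)*τ)))
            ((B*C+A*D)/2 * (∫ τ in t..(t+T), Real.sin ((p+q)*τ)))
            ((B*C-A*D)/2 * (∫ τ in t..(t+T), Real.sin ((p-q)*τ)))
      _ ≤ |(A*C+B*D)/2| * (2/|p-q|) + |(A*C-B*D)/2| * (2/|p+q|)
          + |(B*C+A*D)/2| * (2/|p+q|) + |(B*C-A*D)/2| * (2/|p-q|) := by gcongr
      _ = (|A*C+B*D| + |B*C-A*D|) * (1/|p-q|) + (|A*C-B*D| + |B*C+A*D|) * (1/|p+q|) := by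
          rw [abs_div, abs_div, abs_div, abs_div]; norm_num; ring
      _ ≤ (A^2+B^2+C^2+D^2) * (1/|p-q|) + (A^2+B^2+C^2+D^2) * (1/|p+q|) := by
          gcongr <;> positivity
      _ = (1/|p-q| + 1/(p+q)) * (A^2+B^2+C^2+D^2) := by
          rw [abs_of_pos (show (0:ℝ) < p+q by positivity)]; ring


private lemma coercive' (h J : ℕ) (hh : 1 ≤ h) (hJ : 1 ≤ J)
    (ν : Fin J → ℝ) (hνpos : ∀ j, 0 < ν j) (hνinj : Function.Injective ν)
    (v w : Fin J → Fin h → ℝ)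
    (hspan : Submodule.span ℝ (Set.range v ∪ Set.range w) = ⊤) :
    ∃ cQ : ℝ, 0 < cQ ∧ ∀ x : Fin h → ℝ,
        cQ * (∑ i, x i ^ 2) ≤ ∑ j, ((∑ i, x i * v j i)^2 + (∑ i, x i * w j i)^2) := by
  classical
  haveI : Nonempty (Fin h) := ⟨⟨0, hh⟩⟩
  set qf : EuclideanSpace ℝ (Fin h) → ℝ := fun y => ∑ j, ((∑ i, y i * v j i)^2 + (∑ i, y i * w j i)^2) with hqf
  have hqc : Continuous qf := by
    apply continuous_finset_sum
    intro j _
    apply Continuous.add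
    · exact (continuous_finset_sum _ fun i _ =>
        ((EuclideanSpace.proj i).continuous.mul continuous_const)).pow 2
    · exact (continuous_finset_sum _ fun i _ =>
        ((EuclideanSpace.proj i).continuous.mul continuous_const)).pow 2
  have hsph : (Metric.sphere (0:EuclideanSpace ℝ (Fin h)) 1).Nonempty := by
    refine ⟨EuclideanSpace.single ⟨0, hh⟩ 1, ?_⟩
    simp [mem_sphere_zero_iff_norm, EuclideanSpace.norm_single]
  obtain ⟨y₀, hy₀s, hy₀min⟩ := (isCompact_sphere (0:EuclideanSpace ℝ (Fin h)) 1).exists_isMinOn hsph hqc.continuousOn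
  have hy₀norm : ‖y₀‖ = 1 := mem_sphere_zero_iff_norm.mp hy₀s
  have hq0 : ∀ y : EuclideanSpace ℝ (Fin h), 0 ≤ qf y := fun y => Finset.sum_nonneg fun j _ => by positivity
  have hqy₀ : 0 < qf y₀ := by
    rcases (hq0 y₀).lt_or_eq with hlt | heq
    · exact hlt
    exfalso
    have hall : ∀ j, (∑ i, y₀ i * v j i) = 0 ∧ (∑ i, y₀ i * w j i) = 0 := by
      intro j
      have hterm : ((∑ i, y₀ i * v j i)^2 + (∑ i, y₀ i * w j i)^2) = 0 :=
        (Finset.sum_eq_zero_iff_of_nonneg (fun j _ => by positivity)).mp heq.symm j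
          (Finset.mem_univ j)
      have h1 : (∑ i, y₀ i * v j i)^2 = 0 := by
        nlinarith [sq_nonneg (∑ i, y₀ i * v j i), sq_nonneg (∑ i, y₀ i * w j i)]
      have h2 : (∑ i, y₀ i * w j i)^2 = 0 := by
        nlinarith [sq_nonneg (∑ i, y₀ i * v j i), sq_nonneg (∑ i, y₀ i * w j i)]
      exact ⟨sq_eq_zero_iff.mp h1, sq_eq_zero_iff.mp h2⟩
    let φ : (Fin h → ℝ) →ₗ[ℝ] ℝ :=
      { toFun := fun z => ∑ i, y₀ i * z i
        map_add' := fun a b => by simp [mul_add, Finset.sum_add_distrib]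
        map_smul' := fun m a => by simp [Finset.mul_sum, mul_left_comm] }
    have hsub : Set.range v ∪ Set.range w ⊆ (LinearMap.ker φ : Set _) := by
      rintro z (⟨j, rfl⟩ | ⟨j, rfl⟩)
      · simpa [φ, LinearMap.mem_ker] using (hall j).1
      · simpa [φ, LinearMap.mem_ker] using (hall j).2
    have htop : (⊤ : Submodule ℝ (Fin h → ℝ)) ≤ LinearMap.ker φ :=
      hspan ▸ Submodule.span_le.mpr hsub
    have hφ : φ (fun i => y₀ i) = 0 := htop Submodule.mem_top
    have hy2 : ∑ i, y₀ i ^ 2 = 0 := by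
      have : ∑ i, y₀ i * y₀ i = 0 := hφ
      simpa [sq] using this
    have hz : y₀ = 0 := by
      ext i
      have := (Finset.sum_eq_zero_iff_of_nonneg (fun i _ => sq_nonneg (y₀ i))).mp hy2 i
        (Finset.mem_univ i)
      exact sq_eq_zero_iff.mp this
    rw [hz] at hy₀norm
    simp at hy₀norm
  refine ⟨qf y₀, hqy₀, ?_⟩
  intro x
  by_cases hx : x = 0
  · simp [hx]
  · have hxs : 0 < ∑ i, x i ^ 2 := by
      obtain ⟨i, hi⟩ := Function.ne_iff.mp hx
      have hp : 0 < x i ^ 2 := lt_of_le_of_ne (sq_nonneg _) (Ne.symm (pow_ne_zero 2 hi))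
      exact Finset.sum_pos' (fun i _ => sq_nonneg _) ⟨i, Finset.mem_univ i, hp⟩
    set n : ℝ := Real.sqrt (∑ i, x i ^ 2) with hn
    have hnpos : 0 < n := Real.sqrt_pos.mpr hxs
    have hn2 : n^2 = ∑ i, x i ^ 2 := Real.sq_sqrt hxs.le
    set y : EuclideanSpace ℝ (Fin h) := WithLp.toLp 2 (fun i => n⁻¹ * x i) with hy
    have hsum1 : ∑ i, (n⁻¹ * x i)^2 = 1 := by
      have e : ∑ i, (n⁻¹ * x i)^2 = n⁻¹^2 * ∑ i, x i^2 := by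
        rw [Finset.mul_sum]
        exact Finset.sum_congr rfl fun i _ => by ring
      rw [e, ← hn2]
      field_simp
    have hynorm : ‖y‖ = 1 := by
      rw [EuclideanSpace.norm_eq]
      simp only [Real.norm_eq_abs, sq_abs]
      have : ∀ i, y i = n⁻¹ * x i := fun i => rfl
      simp only [this, hsum1, Real.sqrt_one]
    have hmin := hy₀min (mem_sphere_zero_iff_norm.mpr hynorm)
    have hqy : qf y = n⁻¹^2 * ∑ j, ((∑ i, x i * v j i)^2 + (∑ i, x i * w j i)^2) := by
      rw [hqf, Finset.mul_sum]
      refine Finset.sum_congr rfl fun j _ => ?_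
      have e1 : ∑ i, y i * v j i = n⁻¹ * ∑ i, x i * v j i := by
        rw [Finset.mul_sum]
        exact Finset.sum_congr rfl fun i _ => by show n⁻¹ * x i * v j i = _; ring
      have e2 : ∑ i, y i * w j i = n⁻¹ * ∑ i, x i * w j i := by
        rw [Finset.mul_sum]
        exact Finset.sum_congr rfl fun i _ => by show n⁻¹ * x i * w j i = _; ring
      rw [e1, e2]; ring
    have hle : qf y₀ ≤ n⁻¹^2 * ∑ j, ((∑ i, x i * v j i)^2 + (∑ i, x i * w j i)^2) :=
      hqy ▸ hmin
    have hQx0 : 0 ≤ ∑ j, ((∑ i, x i * v j i)^2 + (∑ i, x i * w j i)^2) :=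
      Finset.sum_nonneg fun j _ => by positivity
    calc qf y₀ * (∑ i, x i ^ 2) = qf y₀ * n^2 := by rw [hn2]
      _ ≤ (n⁻¹^2 * ∑ j, ((∑ i, x i * v j i)^2 + (∑ i, x i * w j i)^2)) * n^2 :=
          mul_le_mul_of_nonneg_right hle (sq_nonneg n)
      _ = ∑ j, ((∑ i, x i * v j i)^2 + (∑ i, x i * w j i)^2) := by
          field_simp

/-- The matrix `∫_t^{t+T} σ(τ)σ(τ)ᵀ dτ`, computed entrywise. -/
noncomputable def peMatrix {h : ℕ} (σ : ℝ → Fin h → ℝ) (t T : ℝ) : Matrix (Fin h) (Fin h) ℝ :=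
  Matrix.of fun i j => ∫ τ in t..(t + T), σ τ i * σ τ j

/-- `σ` is persistently exciting on `[t₀, ∞)`: there are `α, T > 0` such that
`∫_t^{t+T} σσᵀ dτ − α·I` is positive semidefinite for all `t ≥ t₀`. -/
def IsPE {h : ℕ} (σ : ℝ → Fin h → ℝ) (t₀ : ℝ) : Prop :=
  ∃ α T : ℝ, 0 < α ∧ 0 < T ∧ ∀ t ≥ t₀,
    (peMatrix σ t T - α • (1 : Matrix (Fin h) (Fin h) ℝ)).PosSemidef

/-- Proposition 1 of the paper for vector trigonometric signals:
if the coefficient vectors of a vector multisine with pairwise distinct positive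
frequencies span ℝ^h, the signal is persistently exciting on `[0, ∞)`. -/
theorem stmt_2 (h J : ℕ) (hh : 1 ≤ h) (hJ : 1 ≤ J)
    (ν : Fin J → ℝ) (hνpos : ∀ j, 0 < ν j) (hνinj : Function.Injective ν)
    (v w : Fin J → Fin h → ℝ)
    (hspan : Submodule.span ℝ (Set.range v ∪ Set.range w) = ⊤) :
    IsPE (fun t i => ∑ j : Fin J, (v j i * Real.cos (ν j * t) + w j i * Real.sin (ν j * t)))
      0 := by
  classical
  set σ : ℝ → Fin h → ℝ :=
    fun t i => ∑ j : Fin J, (v j i * Real.cos (ν j * t) + w j i * Real.sin (ν j * t)) with hσ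
  have hσc : ∀ i, Continuous fun τ => σ τ i := by
    intro i
    apply continuous_finset_sum
    intro j _
    exact (continuous_const.mul (Real.continuous_cos.comp
        (continuous_const.mul continuous_id))).add
      (continuous_const.mul (Real.continuous_sin.comp (continuous_const.mul continuous_id)))
  -- cross-term constants
  set c : Fin J → Fin J → ℝ :=
    fun j k => (if ν j = ν k then 0 else 1/|ν j - ν k|) + 1/(ν j + ν k) with hc
  have hc0 : ∀ j k, 0 ≤ c j k := by
    intro j k
    have h1 : (0:ℝ) ≤ (if ν j = ν k then 0 else 1/|ν j - ν k|) := by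
      split
      · exact le_rfl
      · exact div_nonneg zero_le_one (abs_nonneg _)
    have h2 : (0:ℝ) ≤ 1/(ν j + ν k) :=
      div_nonneg zero_le_one (by linarith [hνpos j, hνpos k])
    exact add_nonneg h1 h2
  set K : ℝ := ∑ j : Fin J, ∑ k : Fin J, c j k with hK
  have hK0 : 0 ≤ K := Finset.sum_nonneg fun j _ => Finset.sum_nonneg fun k _ => hc0 j k
  have hcK : ∀ j k, c j k ≤ K := by
    intro j k
    calc c j k ≤ ∑ k', c j k' :=
          Finset.single_le_sum (fun k' _ => hc0 j k') (Finset.mem_univ k)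
      _ ≤ K := Finset.single_le_sum (f := fun j' => ∑ k', c j' k')
          (fun j' _ => Finset.sum_nonneg fun k' _ => hc0 j' k') (Finset.mem_univ j)
  obtain ⟨cQ, hcQpos, hlow⟩ := coercive' h J hh hJ ν hνpos hνinj v w hspan
  set T : ℝ := 4*K + 2 with hT
  refine ⟨cQ, T, hcQpos, by rw [hT]; linarith, ?_⟩
  intro t _
  rw [Matrix.posSemidef_iff_dotProduct_mulVec]
  constructor
  · -- Hermitian
    ext i j
    simp only [Matrix.conjTranspose_apply, Matrix.sub_apply, Matrix.smul_apply,
      Matrix.one_apply, peMatrix, Matrix.of_apply, star_trivial, smul_eq_mul]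
    congr 1
    · exact intervalIntegral.integral_congr fun τ _ => mul_comm _ _
    · by_cases hij : i = j
      · subst hij; rfl
      · rw [if_neg hij, if_neg (Ne.symm hij)]
  · intro x
    have hstar : star x = x := funext fun i => rfl
    rw [hstar, Matrix.sub_mulVec, dotProduct_sub, Matrix.smul_mulVec,
      Matrix.one_mulVec, dotProduct_smul, sub_nonneg, smul_eq_mul]
    set a : Fin J → ℝ := fun j => ∑ i, x i * v j i with ha
    set b : Fin J → ℝ := fun j => ∑ i, x i * w j i with hb
    set Q : ℝ := ∑ j, (a j^2 + b j^2) with hQ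
    have hQ0 : 0 ≤ Q := Finset.sum_nonneg fun j _ => by positivity
    have habk : ∀ j, a j^2 + b j^2 ≤ Q :=
      fun j => Finset.single_le_sum (f := fun j => a j^2 + b j^2)
        (fun j _ => by positivity) (Finset.mem_univ j)
    -- pointwise identity
    have hpt : ∀ τ : ℝ, (∑ i, x i * σ τ i)
        = ∑ j, (a j * Real.cos (ν j * τ) + b j * Real.sin (ν j * τ)) := by
      intro τ
      calc ∑ i, x i * σ τ i
          = ∑ i, ∑ j, (x i * v j i * Real.cos (ν j * τ) + x i * w j i * Real.sin (ν j * τ)) := by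
            refine Finset.sum_congr rfl fun i _ => ?_
            rw [Finset.mul_sum]
            exact Finset.sum_congr rfl fun j _ => by ring
        _ = ∑ j, ∑ i, (x i * v j i * Real.cos (ν j * τ) + x i * w j i * Real.sin (ν j * τ)) :=
            Finset.sum_comm
        _ = ∑ j, (a j * Real.cos (ν j * τ) + b j * Real.sin (ν j * τ)) := by
            refine Finset.sum_congr rfl fun j _ => ?_
            rw [Finset.sum_add_distrib, ← Finset.sum_mul, ← Finset.sum_mul]
    -- quadratic form equals the scalar integral
    have hquad : dotProduct x (peMatrix σ t T *ᵥ x)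
        = ∫ τ in t..(t+T), (∑ i, x i * σ τ i)^2 := by
      have h1 : ∀ τ : ℝ, (∑ i, x i * σ τ i)^2
          = ∑ i, ∑ j', (x i * x j') * (σ τ i * σ τ j') := by
        intro τ
        rw [sq, Finset.sum_mul_sum]
        exact Finset.sum_congr rfl fun i _ => Finset.sum_congr rfl fun j' _ => by ring
      rw [intervalIntegral.integral_congr
        (g := fun τ => ∑ i, ∑ j', (x i * x j') * (σ τ i * σ τ j')) (fun τ _ => h1 τ)]
      rw [intervalIntegral.integral_finset_sum
        (f := fun i τ => ∑ j', (x i * x j') * (σ τ i * σ τ j')) (fun i _ => Continuous.intervalIntegrable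
        (continuous_finset_sum _ fun j' _ =>
          continuous_const.mul ((hσc i).mul (hσc j'))) _ _)]
      simp only [dotProduct, Matrix.mulVec, peMatrix, Matrix.of_apply]
      refine Finset.sum_congr rfl fun i _ => ?_
      rw [intervalIntegral.integral_finset_sum
        (f := fun j' τ => (x i * x j') * (σ τ i * σ τ j')) (fun j' _ => Continuous.intervalIntegrable
        (continuous_const.mul ((hσc i).mul (hσc j'))) _ _), Finset.mul_sum]
      refine Finset.sum_congr rfl fun j' _ => ?_
      rw [intervalIntegral.integral_const_mul]
      ring
    -- expand the square of the sinusoid sum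
    have hexp : (∫ τ in t..(t+T), (∑ j, (a j * Real.cos (ν j * τ) + b j * Real.sin (ν j * τ)))^2)
        = ∑ j, ∑ k, ∫ τ in t..(t+T),
            (a j * Real.cos (ν j * τ) + b j * Real.sin (ν j * τ))
            * (a k * Real.cos (ν k * τ) + b k * Real.sin (ν k * τ)) := by
      have hgc : ∀ j : Fin J, Continuous fun τ =>
          a j * Real.cos (ν j * τ) + b j * Real.sin (ν j * τ) := by
        intro j
        exact (continuous_const.mul (Real.continuous_cos.comp
            (continuous_const.mul continuous_id))).add
          (continuous_const.mul (Real.continuous_sin.comp (continuous_const.mul continuous_id)))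
      have h1 : ∀ τ : ℝ, (∑ j, (a j * Real.cos (ν j * τ) + b j * Real.sin (ν j * τ)))^2
          = ∑ j, ∑ k, (a j * Real.cos (ν j * τ) + b j * Real.sin (ν j * τ))
              * (a k * Real.cos (ν k * τ) + b k * Real.sin (ν k * τ)) := by
        intro τ
        rw [sq, Finset.sum_mul_sum]
      rw [intervalIntegral.integral_congr (fun τ _ => h1 τ)]
      rw [intervalIntegral.integral_finset_sum
        (f := fun j τ => ∑ k, (a j * Real.cos (ν j * τ) + b j * Real.sin (ν j * τ))
          * (a k * Real.cos (ν k * τ) + b k * Real.sin (ν k * τ))) (fun j _ => Continuous.intervalIntegrable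
        (continuous_finset_sum _ fun k _ => (hgc j).mul (hgc k)) _ _)]
      exact Finset.sum_congr rfl fun j _ =>
        intervalIntegral.integral_finset_sum (fun k _ =>
          Continuous.intervalIntegrable ((hgc j).mul (hgc k)) _ _)
    -- diagonal sum
    have hdiag : ∑ j, ∑ k, (if ν j = ν k then (a j * a k + b j * b k)*T/2 else 0)
        = Q * T / 2 := by
      rw [hQ, Finset.sum_mul, Finset.sum_div]
      refine Finset.sum_congr rfl fun j _ => ?_
      rw [Finset.sum_eq_single_of_mem j (Finset.mem_univ j)]
      · rw [if_pos rfl]; ring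
      · intro k _ hkj
        exact if_neg (fun hvv => hkj (hνinj hvv.symm))
    -- the error bound
    have herr : |(∑ j, ∑ k, ∫ τ in t..(t+T),
            (a j * Real.cos (ν j * τ) + b j * Real.sin (ν j * τ))
            * (a k * Real.cos (ν k * τ) + b k * Real.sin (ν k * τ))) - Q * T / 2|
        ≤ 2 * K * Q := by
      rw [← hdiag, ← Finset.sum_sub_distrib]
      have step : ∀ j, |∑ k, ((∫ τ in t..(t+T),
            (a j * Real.cos (ν j * τ) + b j * Real.sin (ν j * τ))
            * (a k * Real.cos (ν k * τ) + b k * Real.sin (ν k * τ)))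
            - (if ν j = ν k then (a j * a k + b j * b k)*T/2 else 0))|
          ≤ ∑ k, c j k * (2 * Q) := by
        intro j
        refine (Finset.abs_sum_le_sum_abs _ _).trans ?_
        refine Finset.sum_le_sum fun k _ => ?_
        refine (keyBound (ν j) (ν k) (hνpos j) (hνpos k) (a j) (b j) (a k) (b k) t T).trans ?_
        exact mul_le_mul_of_nonneg_left (by linarith [habk j, habk k]) (hc0 j k)
      have final : ∑ j : Fin J, ∑ k : Fin J, c j k * (2*Q) = 2*K*Q := by
        calc ∑ j : Fin J, ∑ k : Fin J, c j k * (2*Q)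
            = (∑ j : Fin J, ∑ k : Fin J, c j k) * (2*Q) := by
              rw [Finset.sum_mul]
              exact Finset.sum_congr rfl fun j _ => (Finset.sum_mul _ _ _).symm
          _ = 2*K*Q := by rw [← hK]; ring
      refine (Finset.abs_sum_le_sum_abs _ _).trans ?_
      refine le_trans (Finset.sum_le_sum fun j _ => ?_) (le_of_eq final)
      rw [← Finset.sum_sub_distrib]
      exact step j
    -- combine
    have hxx : dotProduct x x = ∑ i, x i ^ 2 := by
      simp [dotProduct, sq]
    rw [hxx, hquad, intervalIntegral.integral_congr (fun τ _ => by rw [hpt τ]), hexp]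
    have h1 := (abs_le.mp herr).1
    have h2 : Q * T / 2 - 2 * K * Q = Q := by rw [hT]; ring
    have h3 : cQ * ∑ i, x i ^ 2 ≤ Q := hlow x
    linarith
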